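/- There exists a path ω* from E to O in the independent-set flip graph of the L×L toric grid (L ≥ 4 even) such that max_{J∈ω*} Δ(J) = L + 1: gradually build a single column-cluster of odd vertices until it contains L/2 − 1 odd active nodes (Δ = L − 1), remove the two even neighbors of the missing odd vertex (Δ reaches L + 1), add the missing odd vertex to form a stripe, then expand the stripe column by column to reach O while keeping Δ ≤ L + 1. Hence φ(E,O) ≤ L + 1. -/

import Mathlib

open scoped Classical

/-- The toric grid: vertex set `(ZMod L) × (ZMod L)`, with an edge between two
vertices iff they differ by `±1 (mod L)` in exactly one coordinate. -/
def torus (L : ℕ) : SimpleGraph (ZMod L × ZMod L) :=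
  SimpleGraph.fromRel (fun u v =>
    (u.1 = v.1 ∧ u.2 = v.2 + 1) ∨ (u.2 = v.2 ∧ u.1 = v.1 + 1))

/-- A vertex of the toric grid is even if its coordinate sum is even. -/
def isEvenVertex {L : ℕ} [NeZero L] (v : ZMod L × ZMod L) : Prop :=
  Even (v.1.val + v.2.val)

/-- The even maximum independent set `E`. -/
noncomputable def evenClass (L : ℕ) [NeZero L] : Finset (ZMod L × ZMod L) :=
  Finset.univ.filter (fun v => isEvenVertex v)

/-- `I` is an independent set of the toric grid. -/
def Indep (L : ℕ) (I : Finset (ZMod L × ZMod L)) : Prop :=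
  ∀ u ∈ I, ∀ v ∈ I, ¬ (torus L).Adj u v

/-- The efficiency gap `Δ(I) = L²/2 − |I|`. -/
def gap (L : ℕ) (I : Finset (ZMod L × ZMod L)) : ℕ := L ^ 2 / 2 - I.card

/-- `ω` is a path of independent sets from `I` to `I'` in which consecutive
configurations differ by a single flip (adding or removing one vertex). -/
def IsFlipPath (L : ℕ) (ω : List (Finset (ZMod L × ZMod L)))
    (I I' : Finset (ZMod L × ZMod L)) : Prop :=
  ω ≠ [] ∧ ω.head? = some I ∧ ω.getLast? = some I' ∧
  (∀ J ∈ ω, Indep L J) ∧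
  ω.Chain' (fun J K => (symmDiff J K).card = 1)

/-- The communication height `φ(I,I') = min over paths `ω : I → I'` of
`max_{J ∈ ω} Δ(J)`. -/
noncomputable def commHeight (L : ℕ) (I I' : Finset (ZMod L × ZMod L)) : ℕ :=
  sInf {b : ℕ | ∃ ω, IsFlipPath L ω I I' ∧ ∀ J ∈ ω, gap L J ≤ b}

/-- The odd maximum independent set `O`. -/
noncomputable def oddClass (L : ℕ) [NeZero L] : Finset (ZMod L × ZMod L) :=
  Finset.univ.filter (fun v => ¬ isEvenVertex v)

/-- Good path: flip path with gap bound along it. -/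
def GPath (L B : ℕ) (ω : List (Finset (ZMod L × ZMod L)))
    (I I' : Finset (ZMod L × ZMod L)) : Prop :=
  IsFlipPath L ω I I' ∧ ∀ J ∈ ω, gap L J ≤ B

variable {L B : ℕ}

lemma gpath_single {I : Finset (ZMod L × ZMod L)} (hI : Indep L I) (hg : gap L I ≤ B) :
    GPath L B [I] I I := by
  refine ⟨⟨by simp, rfl, rfl, by simpa using hI, List.isChain_singleton _⟩, by simpa using hg⟩

lemma gpath_cons {I I' K : Finset (ZMod L × ZMod L)} {ω : List (Finset (ZMod L × ZMod L))}
    (hflip : (symmDiff I K).card = 1) (hI : Indep L I) (hg : gap L I ≤ B)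
    (h : GPath L B ω K I') : GPath L B (I :: ω) I I' := by
  obtain ⟨⟨hne, hhd, hlast, hind, hchain⟩, hgap⟩ := h
  refine ⟨⟨by simp, rfl, ?_, ?_, ?_⟩, ?_⟩
  · rw [List.getLast?_cons, hlast]; cases ω with
    | nil => simp at hne
    | cons a l => simp
  · intro J hJ; rcases List.mem_cons.1 hJ with rfl | hJ
    · exact hI
    · exact hind J hJ
  · cases ω with
    | nil => simp at hne
    | cons a l =>
      refine List.isChain_cons_cons.2 ⟨?_, hchain⟩
      have : a = K := by simpa using hhd
      rw [this]; exact hflip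
  · intro J hJ; rcases List.mem_cons.1 hJ with rfl | hJ
    · exact hg
    · exact hgap J hJ

lemma getLast?_mem {α : Type*} {l : List α} {a : α} (h : l.getLast? = some a) : a ∈ l := by
  cases l with
  | nil => simp at h
  | cons x xs =>
    rw [List.getLast?_eq_getLast (l := x :: xs) (by simp)] at h
    have := List.getLast_mem (l := x :: xs) (by simp)
    simpa [← Option.some_inj.1 h] using this

lemma gpath_trans {I J K : Finset (ZMod L × ZMod L)} {ω₁ ω₂ : List (Finset (ZMod L × ZMod L))}
    (h1 : GPath L B ω₁ I J) (h2 : GPath L B ω₂ J K) :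
    GPath L B (ω₁ ++ ω₂.tail) I K ∧ ∀ X ∈ ω₂, X ∈ ω₁ ++ ω₂.tail := by
  obtain ⟨⟨hne1, hhd1, hlast1, hind1, hch1⟩, hgap1⟩ := h1
  obtain ⟨⟨hne2, hhd2, hlast2, hind2, hch2⟩, hgap2⟩ := h2
  cases ω₂ with
  | nil => simp at hne2
  | cons a l =>
    have ha : a = J := by simpa using hhd2
    subst ha
    constructor
    · refine ⟨⟨by simp [hne1], ?_, ?_, ?_, ?_⟩, ?_⟩
      · cases ω₁ with
        | nil => simp at hne1
        | cons b m => simpa using hhd1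
      · cases l with
        | nil =>
          have h' : a = K := by simpa using hlast2
          rw [h'] at hlast1; simpa using hlast1
        | cons c m =>
          rw [List.getLast?_append]
          have : (c :: m).getLast? = some K := by
            rw [← hlast2, List.getLast?_cons_cons]
          simp [this]
      · intro X hX
        rcases List.mem_append.1 hX with h | h
        · exact hind1 X h
        · exact hind2 X (List.mem_cons_of_mem _ h)
      · show List.IsChain _ _
        rw [List.isChain_append]
        refine ⟨hch1, hch2.tail, ?_⟩
        intro x hx y hy
        rw [hlast1] at hx
        cases l with
        | nil => simp at hy
        | cons c m =>
          have hx' : a = x := by simpa using hx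
          have hy' : c = y := by simpa using hy
          subst hx'; subst hy'
          exact (List.isChain_cons_cons.1 hch2).1
      · intro X hX
        rcases List.mem_append.1 hX with h | h
        · exact hgap1 X h
        · exact hgap2 X (List.mem_cons_of_mem _ h)
    · intro X hX
      rcases List.mem_cons.1 hX with rfl | h
      · exact List.mem_append.2 (Or.inl (getLast?_mem hlast1))
      · exact List.mem_append.2 (Or.inr h)

lemma symmDiff_erase {I : Finset (ZMod L × ZMod L)} {v} (hv : v ∈ I) :
    (symmDiff I (I.erase v)).card = 1 := by
  have : symmDiff I (I.erase v) = {v} := by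
    ext w
    simp only [Finset.mem_symmDiff, Finset.mem_erase, Finset.mem_singleton]
    constructor
    · rintro (⟨h1, h2⟩ | ⟨⟨h1, h2⟩, h3⟩)
      · by_contra hne; exact h2 ⟨hne, h1⟩
      · exact absurd h2 h3
    · rintro rfl; exact Or.inl ⟨hv, fun h => h.1 rfl⟩
  rw [this, Finset.card_singleton]

lemma symmDiff_insert {I : Finset (ZMod L × ZMod L)} {v} (hv : v ∉ I) :
    (symmDiff I (insert v I)).card = 1 := by
  have : symmDiff I (insert v I) = {v} := by
    ext w
    simp only [Finset.mem_symmDiff, Finset.mem_insert, Finset.mem_singleton]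
    constructor
    · rintro (⟨h1, h2⟩ | ⟨h1, h2⟩)
      · exact absurd (Or.inr h1) h2
      · rcases h1 with rfl | h1
        · rfl
        · exact absurd h1 h2
    · rintro rfl; exact Or.inr ⟨Or.inl rfl, hv⟩
  rw [this, Finset.card_singleton]

lemma indep_mono {I J : Finset (ZMod L × ZMod L)} (hIJ : I ⊆ J) (h : Indep L J) : Indep L I :=
  fun u hu v hv => h u (hIJ hu) v (hIJ hv)


section zmod
variable {L : ℕ}

lemma val_succ_cases [NeZero L] (hL : 4 ≤ L) (x y : ZMod L) (h : x = y + 1) :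
    x.val = y.val + 1 ∨ (y.val = L - 1 ∧ x.val = 0) := by
  haveI : Fact (1 < L) := ⟨by omega⟩
  have h1 : x.val = (y.val + 1) % L := by rw [h, ZMod.val_add, ZMod.val_one]
  have h2 : y.val < L := ZMod.val_lt y
  rcases Nat.lt_or_ge (y.val + 1) L with h3 | h3
  · left; rw [h1, Nat.mod_eq_of_lt h3]
  · right
    have h4 : y.val = L - 1 := by omega
    refine ⟨h4, ?_⟩
    rw [h1, h4]
    have : L - 1 + 1 = L := by omega
    rw [this, Nat.mod_self]

lemma torus_adj_val [NeZero L] (hL : 4 ≤ L) {u v : ZMod L × ZMod L} (h : (torus L).Adj u v) :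
    (u.1.val = v.1.val ∧ (u.2.val = v.2.val + 1 ∨ v.2.val = u.2.val + 1 ∨
      (v.2.val = L - 1 ∧ u.2.val = 0) ∨ (u.2.val = L - 1 ∧ v.2.val = 0)))
  ∨ (u.2.val = v.2.val ∧ (u.1.val = v.1.val + 1 ∨ v.1.val = u.1.val + 1 ∨
      (v.1.val = L - 1 ∧ u.1.val = 0) ∨ (u.1.val = L - 1 ∧ v.1.val = 0))) := by
  rw [torus, SimpleGraph.fromRel_adj] at h
  obtain ⟨hne, h | h⟩ := h <;>
  · rcases h with ⟨h1, h2⟩ | ⟨h1, h2⟩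
    · refine Or.inl ⟨by rw [h1], ?_⟩
      rcases val_succ_cases hL _ _ h2 with h3 | h3 <;> tauto
    · refine Or.inr ⟨by rw [h1], ?_⟩
      rcases val_succ_cases hL _ _ h2 with h3 | h3 <;> tauto

lemma count_even_range : ∀ (n c : ℕ), ((Finset.range (2*n)).filter (fun m => Even (c+m))).card = n := by
  intro n
  induction n with
  | zero => simp
  | succ n ih =>
    intro c
    have h1 : 2*(n+1) = (2*n+1)+1 := by ring
    rw [h1, Finset.range_add_one, Finset.filter_insert, Finset.range_add_one, Finset.filter_insert]
    have he : (Even (c + 2*n) ↔ Even c) := by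
      simp only [Nat.even_iff]; omega
    have ho : (Even (c + (2*n+1)) ↔ ¬ Even c) := by
      simp only [Nat.even_iff]; omega
    by_cases hc : Even c
    · rw [if_neg (by rw [ho]; exact not_not_intro hc), if_pos (he.mpr hc),
        Finset.card_insert_of_notMem (fun hm => by simpa using Finset.mem_of_mem_filter _ hm), ih c]
    · rw [if_pos (ho.mpr hc), if_neg (fun hm => hc (he.mp hm)),
        Finset.card_insert_of_notMem (fun hm => by
          have := Finset.mem_of_mem_filter _ hm; simp at this), ih c]

lemma count_even_zmod [NeZero L] (hEv : Even L) (c : ℕ) :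
    (Finset.univ.filter (fun y : ZMod L => Even (c + y.val))).card = L / 2 := by
  obtain ⟨n, hn⟩ := hEv
  have hL2 : L = 2*n := by omega
  have hbij : (Finset.univ.filter (fun y : ZMod L => Even (c + y.val))).card
      = ((Finset.range L).filter (fun m => Even (c+m))).card := by
    apply Finset.card_nbij (i := ZMod.val)
    · intro a ha
      simp only [Finset.mem_coe, Finset.mem_filter, Finset.mem_range]
      exact ⟨ZMod.val_lt a, (Finset.mem_filter.1 ha).2⟩
    · exact fun a _ b _ hab => ZMod.val_injective L hab
    · intro m hm
      simp only [Finset.coe_filter, Set.mem_setOf_eq, Finset.mem_range, Finset.mem_coe] at hm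
      refine ⟨(m : ZMod L), ?_, ?_⟩
      · simp only [Finset.coe_filter, Set.mem_setOf_eq, Finset.mem_univ, true_and, Finset.mem_coe]
        rw [ZMod.val_natCast, Nat.mod_eq_of_lt hm.1]
        exact hm.2
      · rw [ZMod.val_natCast, Nat.mod_eq_of_lt hm.1]
  rw [hbij, hL2, count_even_range n c]
  omega

lemma card_filter_prod [NeZero L] (p : ℕ → ℕ → Prop)
    (hcount : ∀ x : ZMod L, (Finset.univ.filter (fun y : ZMod L => p x.val y.val)).card = L / 2) :
    (Finset.univ.filter (fun v : ZMod L × ZMod L => p v.1.val v.2.val)).card = L * (L/2) := by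
  rw [Finset.card_eq_sum_card_fiberwise (f := Prod.fst) (t := Finset.univ) (fun x _ => Finset.mem_univ _)]
  have hfib : ∀ x : ZMod L,
      ((Finset.univ.filter (fun v : ZMod L × ZMod L => p v.1.val v.2.val)).filter
        (fun v => v.1 = x)).card = L / 2 := by
    intro x
    rw [← hcount x]
    apply Finset.card_nbij (i := Prod.snd)
    · intro a ha
      simp only [Finset.mem_coe, Finset.mem_filter, Finset.mem_univ, true_and] at ha ⊢
      rw [← ha.2]; exact ha.1
    · intro a ha b hb hab
      simp only [Finset.coe_filter, Set.mem_setOf_eq] at ha hb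
      have : a.1 = b.1 := by rw [ha.2, hb.2]
      exact Prod.ext this hab
    · intro y hy
      simp only [Finset.coe_filter, Set.mem_setOf_eq, Finset.mem_univ, true_and, Finset.mem_coe] at hy
      refine ⟨(x, y), ?_, rfl⟩
      exact Finset.mem_coe.2 (Finset.mem_filter.2 ⟨Finset.mem_filter.2 ⟨Finset.mem_univ _, hy⟩, rfl⟩)
  rw [Finset.sum_congr rfl (fun x _ => hfib x)]
  simp [Finset.card_univ, ZMod.card]

end zmod

/-- State in phase A: first `t` even vertices of columns 0 (then 1) removed. -/
noncomputable def stD (L n t : ℕ) [NeZero L] : Finset (ZMod L × ZMod L) :=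
  Finset.univ.filter (fun v => Even (v.1.val + v.2.val) ∧
    ¬(v.1.val = 0 ∧ v.2.val < 2*t) ∧ ¬(v.1.val = 1 ∧ v.2.val < 2*(t-n)))

/-- Vertex erased at step `t` of phase A. -/
noncomputable def vA (L n t : ℕ) : ZMod L × ZMod L :=
  if t < n then (((0:ℕ) : ZMod L), ((2*t : ℕ) : ZMod L))
  else (((1:ℕ) : ZMod L), ((2*(t-n)+1 : ℕ) : ZMod L))

/-- State in phase B, column `k`, `t` swaps done. -/
noncomputable def stU (L k t : ℕ) [NeZero L] : Finset (ZMod L × ZMod L) :=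
  Finset.univ.filter (fun v =>
    (¬Even (v.1.val + v.2.val) ∧ ((1 ≤ v.1.val ∧ v.1.val + 1 ≤ k) ∨ (v.1.val = k ∧ v.2.val < 2*t))) ∨
    (Even (v.1.val + v.2.val) ∧ ((v.1.val = k+1 ∧ 2*t ≤ v.2.val) ∨ k+2 ≤ v.1.val)))

/-- Vertex erased in swap `t` of column `k`. -/
noncomputable def vB (L k t : ℕ) : ZMod L × ZMod L :=
  (((k+1 : ℕ) : ZMod L), ((2*t + (k+1)%2 : ℕ) : ZMod L))

/-- Vertex inserted in swap `t` of column `k`. -/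
noncomputable def wB (L k t : ℕ) : ZMod L × ZMod L :=
  (((k : ℕ) : ZMod L), ((2*t + (k+1)%2 : ℕ) : ZMod L))

/-- State in phase C: `t` odd vertices of columns `2n-1` (then 0) inserted. -/
noncomputable def stF (L n t : ℕ) [NeZero L] : Finset (ZMod L × ZMod L) :=
  Finset.univ.filter (fun v => ¬Even (v.1.val + v.2.val) ∧
    ((1 ≤ v.1.val ∧ v.1.val + 1 ≤ 2*n-1) ∨ (v.1.val = 2*n-1 ∧ v.2.val < 2*t) ∨
     (v.1.val = 0 ∧ v.2.val < 2*(t-n))))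

/-- Vertex inserted at step `t` of phase C. -/
noncomputable def vC (L n t : ℕ) : ZMod L × ZMod L :=
  if t < n then (((2*n-1:ℕ) : ZMod L), ((2*t : ℕ) : ZMod L))
  else (((0:ℕ) : ZMod L), ((2*(t-n)+1 : ℕ) : ZMod L))

section main
variable {L n k t : ℕ} [NeZero L]

lemma val_pair {a b : ℕ} (ha : a < L) (hb : b < L) (v : ZMod L × ZMod L) :
    v = ((a : ZMod L), (b : ZMod L)) ↔ v.1.val = a ∧ v.2.val = b := by
  constructor
  · rintro rfl
    exact ⟨by rw [ZMod.val_natCast]; exact Nat.mod_eq_of_lt ha,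
           by rw [ZMod.val_natCast]; exact Nat.mod_eq_of_lt hb⟩
  · rintro ⟨h1, h2⟩
    have e1 : v.1 = (a : ZMod L) :=
      ZMod.val_injective L (by rw [h1, ZMod.val_natCast, Nat.mod_eq_of_lt ha])
    have e2 : v.2 = (b : ZMod L) :=
      ZMod.val_injective L (by rw [h2, ZMod.val_natCast, Nat.mod_eq_of_lt hb])
    exact Prod.ext e1 e2

lemma stD_zero : stD L n 0 = evenClass L := by
  ext v
  simp [stD, evenClass, isEvenVertex]
  exact ⟨fun h => (@Finset.mem_filter _ _ (fun _ => Classical.propDecidable _) _ _).2 ⟨Finset.mem_univ _, h⟩, fun h => ((@Finset.mem_filter _ _ (fun _ => Classical.propDecidable _) _ _).1 h).2⟩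

lemma vA_mem (hL : L = 2*n) (hn : 2 ≤ n) (ht : t < 2*n) : vA L n t ∈ stD L n t := by
  have h2 : ∀ m : ℕ, m < L → (((m:ℕ) : ZMod L)).val = m := fun m hm => by
    rw [ZMod.val_natCast]; exact Nat.mod_eq_of_lt hm
  by_cases h : t < n
  · have e1 := h2 0 (by omega)
    have e2 := h2 (2*t) (by omega)
    simp only [stD, vA, if_pos h, Finset.mem_filter, Finset.mem_univ, true_and, e1, e2,
      Nat.even_iff]
    omega
  · have e1 := h2 1 (by omega)
    have e2 := h2 (2*(t-n)+1) (by omega)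
    simp only [stD, vA, if_neg h, Finset.mem_filter, Finset.mem_univ, true_and, e1, e2,
      Nat.even_iff]
    omega

lemma stD_succ (hL : L = 2*n) (hn : 2 ≤ n) (ht : t < 2*n) :
    stD L n (t+1) = (stD L n t).erase (vA L n t) := by
  ext v
  have hv1 : v.1.val < L := ZMod.val_lt v.1
  have hv2 : v.2.val < L := ZMod.val_lt v.2
  by_cases h : t < n
  · have hveq := val_pair (L := L) (a := 0) (b := 2*t) (by omega) (by omega) v
    simp only [stD, vA, if_pos h, Finset.mem_erase, Finset.mem_filter, Finset.mem_univ, true_and,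
      Ne, hveq, Nat.even_iff]
    omega
  · have hveq := val_pair (L := L) (a := 1) (b := 2*(t-n)+1) (by omega) (by omega) v
    simp only [stD, vA, if_neg h, Finset.mem_erase, Finset.mem_filter, Finset.mem_univ, true_and,
      Ne, hveq, Nat.even_iff]
    omega

lemma natval (m : ℕ) (hm : m < L) : (((m:ℕ) : ZMod L)).val = m := by
  rw [ZMod.val_natCast]; exact Nat.mod_eq_of_lt hm

lemma vB_mem (hL : L = 2*n) (hk2 : k+2 ≤ 2*n) (ht : t < n) :
    vB L k t ∈ stU L k t := by
  have e1 := natval (L := L) (k+1) (by omega)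
  have e2 := natval (L := L) (2*t + (k+1)%2) (by omega)
  simp only [stU, vB, Finset.mem_filter, Finset.mem_univ, true_and, e1, e2, Nat.even_iff]
  omega

lemma stU_succ (hL : L = 2*n) (hk1 : 1 ≤ k) (hk2 : k+2 ≤ 2*n) (ht : t < n) :
    stU L k (t+1) = insert (wB L k t) ((stU L k t).erase (vB L k t)) := by
  ext v
  have hv1 : v.1.val < L := ZMod.val_lt v.1
  have hv2 : v.2.val < L := ZMod.val_lt v.2
  have hveqB := val_pair (L := L) (a := k+1) (b := 2*t + (k+1)%2) (by omega) (by omega) v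
  have hveqW := val_pair (L := L) (a := k) (b := 2*t + (k+1)%2) (by omega) (by omega) v
  simp only [stU, vB, wB, Finset.mem_insert, Finset.mem_erase, Finset.mem_filter,
    Finset.mem_univ, true_and, hveqB, hveqW, Ne, Nat.even_iff]
  omega

lemma wB_not_mem (hL : L = 2*n) (hk1 : 1 ≤ k) (hk2 : k+2 ≤ 2*n) (ht : t < n) :
    wB L k t ∉ (stU L k t).erase (vB L k t) := by
  intro hmem
  have := Finset.mem_of_mem_erase hmem
  have e1 := natval (L := L) k (by omega)
  have e2 := natval (L := L) (2*t + (k+1)%2) (by omega)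
  simp only [stU, wB, Finset.mem_filter, Finset.mem_univ, true_and, e1, e2, Nat.even_iff] at this
  omega

lemma indepE (hL4 : 4 ≤ L) (hL : L = 2*n) : Indep L (evenClass L) := by
  intro u hu v hv hadj
  simp only [evenClass, isEvenVertex, Finset.mem_filter, Finset.mem_univ, true_and,
    Nat.even_iff] at hu hv
  have h := torus_adj_val hL4 hadj
  have b1 : u.1.val < L := ZMod.val_lt u.1
  have b2 : u.2.val < L := ZMod.val_lt u.2
  have b3 : v.1.val < L := ZMod.val_lt v.1
  have b4 : v.2.val < L := ZMod.val_lt v.2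
  omega

lemma indepO (hL4 : 4 ≤ L) (hL : L = 2*n) : Indep L (oddClass L) := by
  intro u hu v hv hadj
  simp only [oddClass, isEvenVertex, Finset.mem_filter, Finset.mem_univ, true_and,
    Nat.even_iff] at hu hv
  have h := torus_adj_val hL4 hadj
  have b1 : u.1.val < L := ZMod.val_lt u.1
  have b2 : u.2.val < L := ZMod.val_lt u.2
  have b3 : v.1.val < L := ZMod.val_lt v.1
  have b4 : v.2.val < L := ZMod.val_lt v.2
  omega

lemma indepU (hL4 : 4 ≤ L) (hL : L = 2*n) (hk1 : 1 ≤ k) (hk2 : k+2 ≤ 2*n) (ht : t ≤ n) :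
    Indep L (stU L k t) := by
  intro u hu v hv hadj
  simp only [stU, Finset.mem_filter, Finset.mem_univ, true_and, Nat.even_iff] at hu hv
  have h := torus_adj_val hL4 hadj
  have b1 : u.1.val < L := ZMod.val_lt u.1
  have b2 : u.2.val < L := ZMod.val_lt u.2
  have b3 : v.1.val < L := ZMod.val_lt v.1
  have b4 : v.2.val < L := ZMod.val_lt v.2
  omega

lemma stD_subset : stD L n t ⊆ evenClass L := by
  intro v hv
  simp only [stD, Finset.mem_filter, Finset.mem_univ, true_and] at hv
  simp only [evenClass, isEvenVertex, Finset.mem_filter, Finset.mem_univ, true_and]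
  exact (@Finset.mem_filter _ _ (fun _ => Classical.propDecidable _) _ _).2 ⟨Finset.mem_univ _, hv.1⟩

lemma stF_subset : stF L n t ⊆ oddClass L := by
  intro v hv
  simp only [stF, Finset.mem_filter, Finset.mem_univ, true_and] at hv
  simp only [oddClass, isEvenVertex, Finset.mem_filter, Finset.mem_univ, true_and]
  exact (@Finset.mem_filter _ (fun v => ¬ isEvenVertex v) (fun _ => instDecidableNot) _ _).2 ⟨Finset.mem_univ _, hv.1⟩

lemma stU_one (hL : L = 2*n) (hn : 2 ≤ n) : stU L 1 0 = stD L n (2*n) := by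
  ext v
  have hv1 : v.1.val < L := ZMod.val_lt v.1
  have hv2 : v.2.val < L := ZMod.val_lt v.2
  simp only [stU, stD, Finset.mem_filter, Finset.mem_univ, true_and, Nat.even_iff]
  omega

lemma stU_next (hL : L = 2*n) (hk1 : 1 ≤ k) (hk3 : k+3 ≤ 2*n) :
    stU L (k+1) 0 = stU L k n := by
  ext v
  have hv1 : v.1.val < L := ZMod.val_lt v.1
  have hv2 : v.2.val < L := ZMod.val_lt v.2
  simp only [stU, Finset.mem_filter, Finset.mem_univ, true_and, Nat.even_iff]
  omega

lemma stF_zero (hL : L = 2*n) (hn : 2 ≤ n) : stF L n 0 = stU L (2*n-2) n := by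
  ext v
  have hv1 : v.1.val < L := ZMod.val_lt v.1
  have hv2 : v.2.val < L := ZMod.val_lt v.2
  simp only [stF, stU, Finset.mem_filter, Finset.mem_univ, true_and, Nat.even_iff]
  omega

lemma stF_last (hL : L = 2*n) (hn : 2 ≤ n) : stF L n (2*n) = oddClass L := by
  ext v
  have hv1 : v.1.val < L := ZMod.val_lt v.1
  have hv2 : v.2.val < L := ZMod.val_lt v.2
  simp only [stF, oddClass, isEvenVertex, Finset.mem_filter, Finset.mem_univ, true_and,
    Nat.even_iff]
  omega

lemma vC_not_mem (hL : L = 2*n) (hn : 2 ≤ n) (ht : t < 2*n) : vC L n t ∉ stF L n t := by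
  intro hmem
  by_cases h : t < n
  · have e1 := natval (L := L) (2*n-1) (by omega)
    have e2 := natval (L := L) (2*t) (by omega)
    simp only [stF, vC, if_pos h, Finset.mem_filter, Finset.mem_univ, true_and, e1, e2,
      Nat.even_iff] at hmem
    omega
  · have e1 := natval (L := L) 0 (by omega)
    have e2 := natval (L := L) (2*(t-n)+1) (by omega)
    simp only [stF, vC, if_neg h, Finset.mem_filter, Finset.mem_univ, true_and, e1, e2,
      Nat.even_iff] at hmem
    omega

lemma stF_succ (hL : L = 2*n) (hn : 2 ≤ n) (ht : t < 2*n) :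
    stF L n (t+1) = insert (vC L n t) (stF L n t) := by
  ext v
  have hv1 : v.1.val < L := ZMod.val_lt v.1
  have hv2 : v.2.val < L := ZMod.val_lt v.2
  by_cases h : t < n
  · have hveq := val_pair (L := L) (a := 2*n-1) (b := 2*t) (by omega) (by omega) v
    simp only [stF, vC, if_pos h, Finset.mem_insert, Finset.mem_filter, Finset.mem_univ,
      true_and, hveq, Nat.even_iff]
    omega
  · have hveq := val_pair (L := L) (a := 0) (b := 2*(t-n)+1) (by omega) (by omega) v
    simp only [stF, vC, if_neg h, Finset.mem_insert, Finset.mem_filter, Finset.mem_univ,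
      true_and, hveq, Nat.even_iff]
    omega
end main

section assemble
variable {L n : ℕ} [NeZero L]

lemma card_evenClass (hEv : Even L) : (evenClass L).card = L * (L/2) := by
  have h := card_filter_prod (L := L) (fun a b => Even (a+b))
    (fun x => by
      convert count_even_zmod hEv x.val using 2
      ext y
      simp)
  convert h using 2
  rfl

lemma card_stD (hL : L = 2*n) (hn : 2 ≤ n) (hEv : Even L) :
    ∀ t, t ≤ 2*n → (stD L n t).card = 2*n*n - t := by
  intro t
  induction t with
  | zero =>
    intro _
    rw [stD_zero, card_evenClass hEv, hL]
    have h2 : (2*n)/2 = n := by omega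
    rw [h2]
    omega
  | succ t ih =>
    intro h
    rw [stD_succ hL hn (by omega), Finset.card_erase_of_mem (vA_mem hL hn (by omega)),
      ih (by omega)]
    have h1 : 2*n ≤ 2*n*n := Nat.le_mul_of_pos_right _ (by omega)
    omega

lemma card_stU_t {k : ℕ} (hL : L = 2*n) (hk1 : 1 ≤ k) (hk2 : k+2 ≤ 2*n)
    (h0 : (stU L k 0).card = 2*n*n - 2*n) :
    ∀ t, t ≤ n → (stU L k t).card = 2*n*n - 2*n := by
  intro t
  induction t with
  | zero => intro _; exact h0
  | succ t ih =>
    intro h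
    have hmem := vB_mem (t := t) hL hk2 (by omega)
    have hpos : 1 ≤ (stU L k t).card := Finset.card_pos.2 ⟨_, hmem⟩
    rw [stU_succ hL hk1 hk2 (by omega),
      Finset.card_insert_of_notMem (wB_not_mem hL hk1 hk2 (by omega)),
      Finset.card_erase_of_mem hmem]
    rw [ih (by omega)] at hpos ⊢
    omega

lemma card_stU0 (hL : L = 2*n) (hn : 2 ≤ n) (hEv : Even L) :
    ∀ j, j+3 ≤ 2*n → (stU L (j+1) 0).card = 2*n*n - 2*n := by
  intro j
  induction j with
  | zero =>
    intro h
    rw [stU_one hL hn, card_stD hL hn hEv (2*n) le_rfl]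
  | succ j ih =>
    intro h
    rw [stU_next hL (by omega) (by omega)]
    exact card_stU_t hL (by omega) (by omega) (ih (by omega)) n le_rfl

lemma card_stU {k t : ℕ} (hL : L = 2*n) (hn : 2 ≤ n) (hEv : Even L)
    (hk1 : 1 ≤ k) (hk2 : k+2 ≤ 2*n) (ht : t ≤ n) :
    (stU L k t).card = 2*n*n - 2*n := by
  obtain ⟨j, rfl⟩ : ∃ j, k = j + 1 := ⟨k - 1, by omega⟩
  exact card_stU_t hL hk1 hk2 (card_stU0 hL hn hEv j (by omega)) t ht

lemma card_stF (hL : L = 2*n) (hn : 2 ≤ n) (hEv : Even L) :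
    ∀ t, t ≤ 2*n → (stF L n t).card = 2*n*n - 2*n + t := by
  intro t
  induction t with
  | zero =>
    intro _
    rw [stF_zero hL hn]
    exact card_stU hL hn hEv (by omega) (by omega) le_rfl
  | succ t ih =>
    intro h
    rw [stF_succ hL hn (by omega),
      Finset.card_insert_of_notMem (vC_not_mem hL hn (by omega)), ih (by omega)]
    omega

lemma half_sq (hL : L = 2*n) : L^2/2 = 2*n*n := by
  have h : L^2 = 2*(2*n*n) := by subst hL; ring
  omega

lemma phaseA (hL4 : 4 ≤ L) (hL : L = 2*n) (hn : 2 ≤ n) (hEv : Even L) :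
    ∃ ω, GPath L (2*n+1) ω (stD L n 0) (stD L n (2*n)) := by
  have hh := half_sq (L := L) hL
  have hnn : 2*n ≤ 2*n*n := Nat.le_mul_of_pos_right _ (by omega)
  have hgap : ∀ t, t ≤ 2*n → gap L (stD L n t) ≤ 2*n+1 := by
    intro t ht
    simp only [gap]
    rw [hh, card_stD hL hn hEv t ht]
    omega
  have hind : ∀ t, Indep L (stD L n t) :=
    fun t => indep_mono stD_subset (indepE hL4 hL)
  have aux : ∀ d t, t + d = 2*n → ∃ ω, GPath L (2*n+1) ω (stD L n t) (stD L n (2*n)) := by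
    intro d
    induction d with
    | zero =>
      intro t ht
      have h' : t = 2*n := by omega
      subst h'
      exact ⟨_, gpath_single (hind _) (hgap _ le_rfl)⟩
    | succ d ih =>
      intro t ht
      obtain ⟨ω, hω⟩ := ih (t+1) (by omega)
      refine ⟨stD L n t :: ω, gpath_cons (K := stD L n (t+1)) ?_ (hind t) (hgap t (by omega)) hω⟩
      rw [stD_succ hL hn (by omega)]
      exact symmDiff_erase (vA_mem hL hn (by omega))
  exact aux (2*n) 0 (by omega)

lemma phaseB_col {k : ℕ} (hL4 : 4 ≤ L) (hL : L = 2*n) (hn : 2 ≤ n) (hEv : Even L)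
    (hk1 : 1 ≤ k) (hk2 : k+2 ≤ 2*n) :
    ∃ ω, GPath L (2*n+1) ω (stU L k 0) (stU L k n) ∧ ∃ J ∈ ω, gap L J = 2*n+1 := by
  have hh := half_sq (L := L) hL
  have hnn : 2*n*2 ≤ 2*n*n := Nat.mul_le_mul_left _ hn
  have hcard : ∀ t, t ≤ n → (stU L k t).card = 2*n*n - 2*n :=
    fun t ht => card_stU hL hn hEv hk1 hk2 ht
  have hgap : ∀ t, t ≤ n → gap L (stU L k t) ≤ 2*n+1 := by
    intro t ht; simp only [gap]; rw [hh, hcard t ht]; omega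
  have hind : ∀ t, t ≤ n → Indep L (stU L k t) :=
    fun t ht => indepU hL4 hL hk1 hk2 ht
  have aux : ∀ d t, t + d = n →
      ∃ ω, GPath L (2*n+1) ω (stU L k t) (stU L k n) ∧
        (d ≠ 0 → ∃ J ∈ ω, gap L J = 2*n+1) := by
    intro d
    induction d with
    | zero =>
      intro t ht
      have h' : t = n := by omega
      subst h'
      exact ⟨_, gpath_single (hind _ le_rfl) (hgap _ le_rfl), by simp⟩
    | succ d ih =>
      intro t ht
      obtain ⟨ω, hω, _⟩ := ih (t+1) (by omega)
      have hvB := vB_mem (t := t) hL hk2 (by omega)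
      have hmidcard : ((stU L k t).erase (vB L k t)).card = 2*n*n - 2*n - 1 := by
        rw [Finset.card_erase_of_mem hvB, hcard t (by omega)]
      have hmidgap : gap L ((stU L k t).erase (vB L k t)) = 2*n+1 := by
        simp only [gap]; rw [hh, hmidcard]; omega
      have hmidind : Indep L ((stU L k t).erase (vB L k t)) :=
        indep_mono (Finset.erase_subset _ _) (hind t (by omega))
      have step2 : GPath L (2*n+1) ((stU L k t).erase (vB L k t) :: ω)
          ((stU L k t).erase (vB L k t)) (stU L k n) := by
        refine gpath_cons (K := stU L k (t+1)) ?_ hmidind (le_of_eq hmidgap) hω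
        rw [stU_succ hL hk1 hk2 (by omega)]
        exact symmDiff_insert (wB_not_mem hL hk1 hk2 (by omega))
      refine ⟨stU L k t :: (stU L k t).erase (vB L k t) :: ω,
        gpath_cons (symmDiff_erase hvB) (hind t (by omega)) (hgap t (by omega)) step2,
        fun _ => ⟨_, by simp, hmidgap⟩⟩
  obtain ⟨ω, hω, hw⟩ := aux n 0 (by omega)
  exact ⟨ω, hω, hw (by omega)⟩

lemma phaseB (hL4 : 4 ≤ L) (hL : L = 2*n) (hn : 2 ≤ n) (hEv : Even L) :
    ∃ ω, GPath L (2*n+1) ω (stU L 1 0) (stU L (2*n-2) n) ∧ ∃ J ∈ ω, gap L J = 2*n+1 := by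
  have aux : ∀ d k, 1 ≤ k → k + d = 2*n-2 →
      ∃ ω, GPath L (2*n+1) ω (stU L k 0) (stU L (2*n-2) n) ∧ ∃ J ∈ ω, gap L J = 2*n+1 := by
    intro d
    induction d with
    | zero =>
      intro k hk1 hk
      have h' : k = 2*n-2 := by omega
      subst h'
      exact phaseB_col hL4 hL hn hEv hk1 (by omega)
    | succ d ih =>
      intro k hk1 hk
      obtain ⟨ω₁, hω₁, J, hJ, hJgap⟩ := phaseB_col hL4 hL hn hEv hk1 (by omega)
      obtain ⟨ω₂, hω₂, _⟩ := ih (k+1) (by omega) (by omega)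
      rw [stU_next hL hk1 (by omega)] at hω₂
      obtain ⟨hpath, _⟩ := gpath_trans hω₁ hω₂
      exact ⟨_, hpath, J, List.mem_append_left _ hJ, hJgap⟩
  exact aux (2*n-2-1) 1 (by omega) (by omega)

lemma phaseC (hL4 : 4 ≤ L) (hL : L = 2*n) (hn : 2 ≤ n) (hEv : Even L) :
    ∃ ω, GPath L (2*n+1) ω (stF L n 0) (stF L n (2*n)) := by
  have hh := half_sq (L := L) hL
  have hgap : ∀ t, t ≤ 2*n → gap L (stF L n t) ≤ 2*n+1 := by
    intro t ht
    simp only [gap]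
    rw [hh, card_stF hL hn hEv t ht]
    omega
  have hind : ∀ t, Indep L (stF L n t) :=
    fun t => indep_mono stF_subset (indepO hL4 hL)
  have aux : ∀ d t, t + d = 2*n → ∃ ω, GPath L (2*n+1) ω (stF L n t) (stF L n (2*n)) := by
    intro d
    induction d with
    | zero =>
      intro t ht
      have h' : t = 2*n := by omega
      subst h'
      exact ⟨_, gpath_single (hind _) (hgap _ le_rfl)⟩
    | succ d ih =>
      intro t ht
      obtain ⟨ω, hω⟩ := ih (t+1) (by omega)
      refine ⟨stF L n t :: ω, gpath_cons (K := stF L n (t+1)) ?_ (hind t) (hgap t (by omega)) hω⟩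
      rw [stF_succ hL hn (by omega)]
      exact symmDiff_insert (vC_not_mem hL hn (by omega))
  exact aux (2*n) 0 (by omega)

end assemble


/-- There exists a flip path `ω*` from `E` to `O` through the
independent sets of the `L×L` toric grid (`L ≥ 4` even) along which the
efficiency gap `Δ` never exceeds `L + 1`, and attains the value `L + 1`
(the path builds a column-cluster, creates a stripe, and expands it column by
column); hence `φ(E,O) ≤ L + 1`. -/
theorem stmt_15 (L : ℕ) [NeZero L] (hL : 4 ≤ L) (hLeven : Even L) :
    (∃ ω : List (Finset (ZMod L × ZMod L)),
      IsFlipPath L ω (evenClass L) (oddClass L) ∧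
      (∀ J ∈ ω, gap L J ≤ L + 1) ∧
      (∃ J ∈ ω, gap L J = L + 1)) ∧
    commHeight L (evenClass L) (oddClass L) ≤ L + 1 := by
  have hEv : Even L := hLeven
  obtain ⟨n, hn2⟩ := hLeven
  have hLn : L = 2*n := by omega
  have hn : 2 ≤ n := by omega
  obtain ⟨ωA, hA⟩ := phaseA hL hLn hn hEv
  obtain ⟨ωB, hB, J, hJ, hJgap⟩ := phaseB hL hLn hn hEv
  obtain ⟨ωC, hC⟩ := phaseC hL hLn hn hEv
  rw [stU_one hLn hn] at hB
  rw [stF_zero hLn hn] at hC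
  obtain ⟨hAB, hmemAB⟩ := gpath_trans hA hB
  obtain ⟨hABC, _⟩ := gpath_trans hAB hC
  rw [stD_zero, stF_last hLn hn] at hABC
  have hJ' : J ∈ ωA ++ ωB.tail ++ ωC.tail :=
    List.mem_append_left _ (hmemAB J hJ)
  have hB1 : (2*n : ℕ) + 1 = L + 1 := by omega
  obtain ⟨hpath, hgapb⟩ := hABC
  refine ⟨⟨_, hpath, fun K hK => hB1 ▸ hgapb K hK, J, hJ', hB1 ▸ hJgap⟩, ?_⟩
  apply Nat.sInf_le
  exact ⟨_, hpath, fun K hK => hB1 ▸ hgapb K hK⟩
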